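/- Let r, σ, b > 0 and a ∈ ℝ with 0 < r < 1, and assume one of the following parameter regimes: (a = 0), or (b = 1, a > 0 and σ > a·r), or (a < 0 and σ = −a·r). Then the zero equilibrium of the Lorenz-like system is globally attractive: every differentiable solution u : [0, ∞) → ℝ³ of the system satisfies u(t) → (0, 0, 0) as t → ∞. -/

import Mathlib

set_option maxHeartbeats 1000000

open Filter Real

private lemma tendsto_of_sq {f : ℝ → ℝ}
    (h : Tendsto (fun t => f t ^ 2) atTop (nhds 0)) :
    Tendsto f atTop (nhds 0) := by
  rw [tendsto_zero_iff_abs_tendsto_zero]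
  have hs : Tendsto (fun t => Real.sqrt (f t ^ 2)) atTop (nhds 0) := by
    have := (Real.continuous_sqrt.tendsto 0).comp h
    simpa [Function.comp_def] using this
  simpa [Real.sqrt_sq_eq_abs, Function.comp_def] using hs

theorem stmt_5 (r σ b a : ℝ) (hr : 0 < r) (hσ : 0 < σ) (hb : 0 < b) (hr1 : r < 1)
    (hcase : a = 0 ∨ (b = 1 ∧ 0 < a ∧ a * r < σ) ∨ (a < 0 ∧ σ = -a * r))
    (x y z : ℝ → ℝ)
    (hx : ∀ t, 0 ≤ t → HasDerivAt x (-σ * (x t - y t) - a * y t * z t) t)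
    (hy : ∀ t, 0 ≤ t → HasDerivAt y (r * x t - y t - x t * z t) t)
    (hz : ∀ t, 0 ≤ t → HasDerivAt z (-b * z t + x t * y t) t) :
    Filter.Tendsto (fun t => (x t, y t, z t)) Filter.atTop
      (nhds ((0 : ℝ), (0 : ℝ), (0 : ℝ))) := by
  -- choose Lyapunov coefficients
  obtain ⟨α, β, γ, hα, hβ, hγ, hγeq, hDpos⟩ :
      ∃ α β γ : ℝ, 0 < α ∧ 0 < β ∧ 0 < γ ∧ γ = α * a + β ∧
        (α * σ + β * r) ^ 2 < 4 * (α * σ) * β := by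
    rcases hcase with h0 | ⟨hb1, ha, har⟩ | ⟨ha, har⟩
    · refine ⟨1/σ, 1, 1, by positivity, one_pos, one_pos, by rw [h0]; ring, ?_⟩
      have h1 : (1/σ) * σ = 1 := by field_simp
      rw [h1]; nlinarith
    · refine ⟨1/σ, 1, 1/σ * a + 1, by positivity, one_pos, by positivity, rfl, ?_⟩
      have h1 : (1/σ) * σ = 1 := by field_simp
      rw [h1]; nlinarith
    · have ha' : a = -σ / r := by
        field_simp
        linarith [har]
      refine ⟨1/σ, (2-r)/r, (1-r)/r, by positivity,
        div_pos (by linarith) hr, div_pos (by linarith) hr, ?_, ?_⟩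
      · rw [ha']; field_simp; ring
      · have h1 : (1/σ) * σ = 1 := by field_simp
        have h2 : ((2-r)/r) * r = 2 - r := by field_simp
        rw [h1, h2]
        rw [show 4 * 1 * ((2-r)/r) = (8 - 4*r)/r by ring]
        rw [lt_div_iff₀ hr]
        nlinarith [sq_nonneg (r - 5/2), mul_pos (sub_pos.2 hr1) hr]
  -- the decay rate
  set D : ℝ := 4 * (α * σ) * β - (α * σ + β * r) ^ 2 with hD
  have hD0 : 0 < D := by simp [hD]; linarith
  set c : ℝ := min (min σ (min 1 b)) (D / ((2 * σ + 2) * (α * β))) with hcdef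
  have hc : 0 < c := by
    refine lt_min (lt_min hσ (lt_min one_pos hb)) (div_pos hD0 (by positivity))
  have hc1 : c ≤ 1 :=
    le_trans (min_le_left _ _) (le_trans (min_le_right _ _) (min_le_left _ _))
  have hcb : c ≤ b :=
    le_trans (min_le_left _ _) (le_trans (min_le_right _ _) (min_le_right _ _))
  have hcσ' : c ≤ σ := le_trans (min_le_left _ _) (min_le_left _ _)
  have hcσ : c < 2 * σ := by linarith
  have hcD : c * ((2 * σ + 2) * (α * β)) ≤ D := by
    have := min_le_right (min σ (min 1 b)) (D / ((2 * σ + 2) * (α * β)))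
    rw [hcdef]
    calc min (min σ (min 1 b)) (D / ((2 * σ + 2) * (α * β))) * ((2 * σ + 2) * (α * β))
        ≤ (D / ((2 * σ + 2) * (α * β))) * ((2 * σ + 2) * (α * β)) := by
          apply mul_le_mul_of_nonneg_right this (by positivity)
      _ = D := by field_simp
  -- key quadratic-form estimate
  have hkey : ∀ X Y Z : ℝ,
      c * (α * X ^ 2 + β * Y ^ 2 + γ * Z ^ 2) ≤
        2 * (α * σ) * X ^ 2 - 2 * (α * σ + β * r) * X * Y + 2 * β * Y ^ 2
          + 2 * γ * b * Z ^ 2 := by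
    intro X Y Z
    have hAC : (α * σ + β * r) ^ 2 ≤ (α * (2 * σ - c)) * (β * (2 - c)) := by
      have hsq : 0 ≤ c ^ 2 * (α * β) := by positivity
      nlinarith [hcD]
    have hA : 0 < α * (2 * σ - c) := by nlinarith
    have hz2 : c * (γ * Z ^ 2) ≤ 2 * γ * b * Z ^ 2 := by
      nlinarith [sq_nonneg Z, mul_nonneg (le_of_lt hγ) (sq_nonneg Z)]
    have hxy : c * (α * X ^ 2 + β * Y ^ 2) ≤
        2 * (α * σ) * X ^ 2 - 2 * (α * σ + β * r) * X * Y + 2 * β * Y ^ 2 := by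
      nlinarith [sq_nonneg ((α * (2 * σ - c)) * X - (α * σ + β * r) * Y),
        mul_nonneg (sub_nonneg.2 hAC) (sq_nonneg Y), hA, sq_nonneg Y]
    linarith
  -- Lyapunov function
  set V : ℝ → ℝ := fun t => α * x t ^ 2 + β * y t ^ 2 + γ * z t ^ 2 with hVdef
  have hVd : ∀ t, 0 ≤ t → HasDerivAt V
      (α * (2 * x t * (-σ * (x t - y t) - a * y t * z t))
        + β * (2 * y t * (r * x t - y t - x t * z t))
        + γ * (2 * z t * (-b * z t + x t * y t))) t := by
    intro t ht
    have h1 := (((hx t ht).pow 2).const_mul α)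
    have h2 := (((hy t ht).pow 2).const_mul β)
    have h3 := (((hz t ht).pow 2).const_mul γ)
    have := (h1.add h2).add h3
    refine this.congr_deriv ?_
    push_cast
    ring
  have hVle : ∀ t, 0 ≤ t →
      α * (2 * x t * (-σ * (x t - y t) - a * y t * z t))
        + β * (2 * y t * (r * x t - y t - x t * z t))
        + γ * (2 * z t * (-b * z t + x t * y t)) ≤ -c * V t := by
    intro t ht
    have hexpr : α * (2 * x t * (-σ * (x t - y t) - a * y t * z t))
        + β * (2 * y t * (r * x t - y t - x t * z t))
        + γ * (2 * z t * (-b * z t + x t * y t))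
        = -(2 * (α * σ) * x t ^ 2 - 2 * (α * σ + β * r) * x t * y t
            + 2 * β * y t ^ 2 + 2 * γ * b * z t ^ 2) := by
      rw [hγeq]; ring
    rw [hexpr]
    have := hkey (x t) (y t) (z t)
    simp only [hVdef]
    linarith
  -- Grönwall: g = V * exp (c t) is antitone on [0, ∞)
  set g : ℝ → ℝ := fun t => V t * Real.exp (c * t) with hgdef
  have hgd : ∀ t, 0 ≤ t → HasDerivAt g
      ((α * (2 * x t * (-σ * (x t - y t) - a * y t * z t))
        + β * (2 * y t * (r * x t - y t - x t * z t))
        + γ * (2 * z t * (-b * z t + x t * y t))) * Real.exp (c * t)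
        + V t * (Real.exp (c * t) * c)) t := by
    intro t ht
    have hE : HasDerivAt (fun s => Real.exp (c * s)) (Real.exp (c * t) * c) t := by
      simpa using (((hasDerivAt_id t).const_mul c).exp)
    exact (hVd t ht).mul hE
  have hanti : AntitoneOn g (Set.Ici (0:ℝ)) := by
    apply antitoneOn_of_deriv_nonpos (convex_Ici 0)
    · intro t ht
      exact ((hgd t ht).continuousAt).continuousWithinAt
    · intro t ht
      rw [interior_Ici] at ht
      exact ((hgd t (le_of_lt ht)).differentiableAt).differentiableWithinAt
    · intro t ht
      rw [interior_Ici] at ht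
      rw [(hgd t (le_of_lt ht)).deriv]
      have h1 := hVle t (le_of_lt ht)
      have h2 : (0:ℝ) < Real.exp (c * t) := Real.exp_pos _
      nlinarith
  -- decay estimate
  have hVdecay : ∀ t, 0 ≤ t → V t ≤ V 0 * Real.exp (-(c * t)) := by
    intro t ht
    have := hanti (Set.self_mem_Ici) (Set.mem_Ici.2 ht) ht
    simp only [hgdef, mul_zero, Real.exp_zero, mul_one] at this
    have h2 : (0:ℝ) < Real.exp (c * t) := Real.exp_pos _
    rw [Real.exp_neg, ← div_eq_mul_inv, le_div_iff₀ h2]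
    linarith [this]
  have hVnonneg : ∀ t, 0 ≤ V t := by
    intro t; simp only [hVdef]; positivity
  -- V tends to 0
  have hup : Tendsto (fun t => V 0 * Real.exp (-(c * t))) atTop (nhds 0) := by
    have h1 : Tendsto (fun t : ℝ => -(c * t)) atTop atBot := by
      apply Filter.tendsto_neg_atBot_iff.mpr
      exact Tendsto.const_mul_atTop hc tendsto_id
    have := (Real.tendsto_exp_atBot.comp h1).const_mul (V 0)
    simpa using this
  have hV0 : Tendsto V atTop (nhds 0) := by
    apply tendsto_of_tendsto_of_tendsto_of_le_of_le' tendsto_const_nhds hup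
    · exact Eventually.of_forall hVnonneg
    · filter_upwards [eventually_ge_atTop (0:ℝ)] with t ht using hVdecay t ht
  -- coordinates tend to 0
  have hcoord : ∀ (f : ℝ → ℝ) (δ : ℝ), 0 < δ → (∀ t, δ * f t ^ 2 ≤ V t) →
      Tendsto f atTop (nhds 0) := by
    intro f δ hδ hle
    apply tendsto_of_sq
    have h1 : Tendsto (fun t => δ * f t ^ 2) atTop (nhds 0) := by
      apply tendsto_of_tendsto_of_tendsto_of_le_of_le' tendsto_const_nhds hV0
      · exact Eventually.of_forall fun t => by positivity
      · exact Eventually.of_forall hle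
    have h2 := h1.const_mul δ⁻¹
    rw [mul_zero] at h2
    exact h2.congr fun t => by field_simp
  have hx0 : Tendsto x atTop (nhds 0) := by
    apply hcoord x α hα
    intro t
    have h1 : 0 ≤ β * y t ^ 2 + γ * z t ^ 2 := by positivity
    have h2 : V t = α * x t ^ 2 + β * y t ^ 2 + γ * z t ^ 2 := rfl
    rw [h2]; linarith
  have hy0 : Tendsto y atTop (nhds 0) := by
    apply hcoord y β hβ
    intro t
    have h1 : 0 ≤ α * x t ^ 2 + γ * z t ^ 2 := by positivity
    have h2 : V t = α * x t ^ 2 + β * y t ^ 2 + γ * z t ^ 2 := rfl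
    rw [h2]; linarith
  have hz0 : Tendsto z atTop (nhds 0) := by
    apply hcoord z γ hγ
    intro t
    have h1 : 0 ≤ α * x t ^ 2 + β * y t ^ 2 := by positivity
    have h2 : V t = α * x t ^ 2 + β * y t ^ 2 + γ * z t ^ 2 := rfl
    rw [h2]; linarith
  exact hx0.prodMk_nhds (hy0.prodMk_nhds hz0)
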